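/- Positivity criterion for the third USD effect: let P₁ and P₂ be rank-one orthogonal projections on ℂ² (2×2 complex matrices with P² = P = P† and trace 1) and let p, q ∈ [0,1]. Then the matrix 1 − p·P₁ − q·P₂ is positive semidefinite if and only if (1−p)(1−q) ≥ p·q·Re tr(P₁P₂). -/

import Mathlib

open Matrix
open scoped ComplexOrder

/-- A qubit state: a positive semidefinite 2×2 complex matrix with trace 1. -/
def QubitState (ρ : Matrix (Fin 2) (Fin 2) ℂ) : Prop :=
  ρ.PosSemidef ∧ ρ.trace = 1

/-- A qubit effect: a 2×2 complex matrix `E` with both `E` and `1 - E` positive semidefinite. -/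
def QubitEffect (E : Matrix (Fin 2) (Fin 2) ℂ) : Prop :=
  E.PosSemidef ∧ (1 - E).PosSemidef

/-- A realization of a 3×3 correlation matrix `P` by three qubit states, a three-outcome
qubit POVM `(M11, M21, M31)` and a two-outcome qubit POVM `(M12, M22)`. -/
def IsRealization (P : Matrix (Fin 3) (Fin 3) ℝ)
    (ρ : Fin 3 → Matrix (Fin 2) (Fin 2) ℂ)
    (M11 M21 M31 M12 M22 : Matrix (Fin 2) (Fin 2) ℂ) : Prop :=
  (∀ x, QubitState (ρ x)) ∧
  QubitEffect M11 ∧ QubitEffect M21 ∧ QubitEffect M31 ∧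
  M11 + M21 + M31 = 1 ∧
  QubitEffect M12 ∧ QubitEffect M22 ∧
  M12 + M22 = 1 ∧
  (∀ x, P x 0 = ((ρ x * M11).trace).re ∧
        P x 1 = ((ρ x * M21).trace).re ∧
        P x 2 = ((ρ x * M12).trace).re)

/-- The USD pattern of zeros and ones of the correlation matrix, Eq. (3). -/
def USDpattern (P : Matrix (Fin 3) (Fin 3) ℝ) : Prop :=
  P 0 2 = 0 ∧ P 1 1 = 0 ∧ P 1 2 = 1 ∧ P 2 0 = 0

/-- The set USD₂ of qubit USD correlations. -/
def USD2 (P : Matrix (Fin 3) (Fin 3) ℝ) : Prop :=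
  USDpattern P ∧
  ∃ ρ M11 M21 M31 M12 M22, IsRealization P ρ M11 M21 M31 M12 M22

/-- A three-outcome qubit POVM is simulable by dichotomic measurements, Eq. (1). -/
def Simulable (M11 M21 M31 : Matrix (Fin 2) (Fin 2) ℂ) : Prop :=
  ∃ p1 p2 p3 : ℝ, ∃ N11 N22 N13 : Matrix (Fin 2) (Fin 2) ℂ,
    0 ≤ p1 ∧ 0 ≤ p2 ∧ 0 ≤ p3 ∧ p1 + p2 + p3 = 1 ∧
    QubitEffect N11 ∧ QubitEffect N22 ∧ QubitEffect N13 ∧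
    M11 = p1 • N11 + p3 • N13 ∧
    M21 = p1 • (1 - N11) + p2 • N22 ∧
    M31 = p2 • (1 - N22) + p3 • (1 - N13)

/-- The set SIM₂ of simulable trichotomic qubit correlations in the minimal scenario. -/
def SIM2 (P : Matrix (Fin 3) (Fin 3) ℝ) : Prop :=
  ∃ ρ M11 M21 M31 M12 M22, IsRealization P ρ M11 M21 M31 M12 M22 ∧
    Simulable M11 M21 M31

/-- The parameterized USD correlation matrix 𝒫(p, q, ξ) of Eq. (4). -/
noncomputable def Pmat (p q ξ : ℝ) : Matrix (Fin 3) (Fin 3) ℝ :=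
  !![p * ξ,       q,           0;
     p * (1 - ξ), 0,           1;
     0,           q * (1 - ξ), ξ]


private lemma two_det_eq (A : Matrix (Fin 2) (Fin 2) ℂ) :
    2 * A.det = A.trace ^ 2 - (A * A).trace := by
  simp [Matrix.det_fin_two, Matrix.trace_fin_two, Matrix.mul_apply, Fin.sum_univ_two]
  ring

private lemma trace_eq_sum_eigs {A : Matrix (Fin 2) (Fin 2) ℂ} (hA : A.IsHermitian) :
    A.trace = ∑ i, (hA.eigenvalues i : ℂ) := by
  exact hA.trace_eq_sum_eigenvalues

private lemma real_smul_mat (p : ℝ) (A : Matrix (Fin 2) (Fin 2) ℂ) :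
    p • A = (p : ℂ) • A := by
  ext i j
  simp [Complex.real_smul]

/-- Positivity criterion for the third USD effect: for rank-one projections `P₁, P₂` on ℂ²
and `p, q ∈ [0,1]`, the matrix `1 - p P₁ - q P₂` is positive semidefinite iff
`(1-p)(1-q) ≥ p q Re tr(P₁ P₂)`. -/
theorem third_effect_posSemidef_iff
    (P1 P2 : Matrix (Fin 2) (Fin 2) ℂ)
    (hP1 : P1 * P1 = P1) (hP1H : P1ᴴ = P1) (hP1t : P1.trace = 1)
    (hP2 : P2 * P2 = P2) (hP2H : P2ᴴ = P2) (hP2t : P2.trace = 1)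
    (p q : ℝ) (hp : p ∈ Set.Icc (0 : ℝ) 1) (hq : q ∈ Set.Icc (0 : ℝ) 1) :
    ((1 : Matrix (Fin 2) (Fin 2) ℂ) - p • P1 - q • P2).PosSemidef ↔
      (1 - p) * (1 - q) ≥ p * q * ((P1 * P2).trace).re := by

  have hx := hp.1; have hx1 := hp.2; have hy := hq.1; have hy1 := hq.2
  set M : Matrix (Fin 2) (Fin 2) ℂ := 1 - p • P1 - q • P2 with hMdef
  have hM : M.IsHermitian := by
    unfold Matrix.IsHermitian
    rw [hMdef, real_smul_mat, real_smul_mat]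
    simp [Matrix.conjTranspose_sub, Matrix.conjTranspose_smul, hP1H, hP2H,
      Complex.conj_ofReal]
  have htr : M.trace = 2 - (p : ℂ) - (q : ℂ) := by
    rw [hMdef, real_smul_mat, real_smul_mat]
    simp [Matrix.trace_sub, Matrix.trace_smul, hP1t, hP2t, Matrix.trace_one]
  have h2 : (M * M).trace
      = 2 - 2 * (p : ℂ) - 2 * (q : ℂ) + (p : ℂ) ^ 2 + (q : ℂ) ^ 2
        + 2 * (p : ℂ) * (q : ℂ) * (P1 * P2).trace := by
    rw [hMdef, real_smul_mat, real_smul_mat]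
    simp only [Matrix.sub_mul, Matrix.mul_sub, Matrix.one_mul, Matrix.mul_one,
      Matrix.smul_mul, Matrix.mul_smul, smul_smul, Matrix.trace_sub, Matrix.trace_smul,
      hP1, hP2, hP1t, hP2t, Matrix.trace_one, Matrix.trace_mul_comm P2 P1]
    simp [smul_eq_mul]
    ring
  have hdet : M.det = (1 - (p : ℂ)) * (1 - (q : ℂ))
      - (p : ℂ) * (q : ℂ) * (P1 * P2).trace := by
    have h := two_det_eq M
    rw [htr, h2] at h
    linear_combination h / 2
  set e := hM.eigenvalues with he
  have hsum : e 0 + e 1 = 2 - p - q := by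
    have h := (trace_eq_sum_eigs hM).symm.trans htr
    rw [Fin.sum_univ_two] at h
    exact_mod_cast h
  have hprodC : ((e 0 : ℂ)) * (e 1 : ℂ)
      = (1 - (p : ℂ)) * (1 - (q : ℂ)) - (p : ℂ) * (q : ℂ) * (P1 * P2).trace := by
    have h := hM.det_eq_prod_eigenvalues
    rw [Fin.prod_univ_two] at h
    rw [← hdet]
    exact_mod_cast h.symm
  have hprod : e 0 * e 1 = (1 - p) * (1 - q) - p * q * ((P1 * P2).trace).re := by
    have h := congrArg Complex.re hprodC
    simpa using h
  constructor
  · intro hPSD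
    have h0 : 0 ≤ e 0 := hPSD.eigenvalues_nonneg 0
    have h1 : 0 ≤ e 1 := hPSD.eigenvalues_nonneg 1
    nlinarith [mul_nonneg h0 h1]
  · intro hineq
    refine hM.posSemidef_iff_eigenvalues_nonneg.mpr (Pi.le_def.mpr fun i => ?_)
    have hps : 0 ≤ e 0 * e 1 := by rw [hprod]; linarith
    have h0 : 0 ≤ e 0 := by nlinarith [sq_nonneg (e 0)]
    have h1 : 0 ≤ e 1 := by nlinarith [sq_nonneg (e 1)]
    fin_cases i <;> assumption
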